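/- Let n ≥ 2, κ > 1, P ∈ ℝⁿ with P ≠ 0, and |P| < b < κ|P|. Then: (c) for every x ∈ Γ(P,b), (b − |P|)/κ ≤ |P − h(x,P,b)x| ≤ (b − |P|)/(κ − 1); (d) √((κ|P| − b)/|P|) · (κ² + κ − 2)/(2κ√(2κ(κ² − 1))) ≤ I(P,b) − 1/κ ≤ √((κ|P| − b)/|P|) · 2√(κ − 1)/κ. -/

import Mathlib

open scoped RealInnerProductSpace

/-- The discriminant `Δ(t) = (κ²t − b)² − (κ² − 1)(κ²|P|² − b²)` for the Cartesian oval in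
the case `κ > 1`. -/
noncomputable def ovalDelta' (κ b normP t : ℝ) : ℝ :=
  (κ ^ 2 * t - b) ^ 2 - (κ ^ 2 - 1) * (κ ^ 2 * normP ^ 2 - b ^ 2)

/-- The polar radius `h(x,P,b) = ρ₋(x)` of the refracting piece of the Cartesian oval
(case `κ > 1`). -/
noncomputable def ovalH' {n : ℕ} (κ b : ℝ) (P x : EuclideanSpace ℝ (Fin n)) : ℝ :=
  ((κ ^ 2 * ⟪x, P⟫ - b) - Real.sqrt (ovalDelta' κ b ‖P‖ ⟪x, P⟫)) / (κ ^ 2 - 1)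

/-- `I(P,b) = (b + √((κ² − 1)(κ²|P|² − b²)))/(κ²|P|)`. -/
noncomputable def ovalI (κ b normP : ℝ) : ℝ :=
  (b + Real.sqrt ((κ ^ 2 - 1) * (κ ^ 2 * normP ^ 2 - b ^ 2))) / (κ ^ 2 * normP)

/-- `Γ(P,b) = {x ∈ S^{n−1} : x·P ≥ I(P,b)|P|}`, the set of directions of the refracting
piece of the oval. -/
def ovalGamma {n : ℕ} (κ b : ℝ) (P : EuclideanSpace ℝ (Fin n)) :
    Set (EuclideanSpace ℝ (Fin n)) :=
  {x | ‖x‖ = 1 ∧ ovalI κ b ‖P‖ * ‖P‖ ≤ ⟪x, P⟫}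

set_option maxHeartbeats 1000000 in
theorem stmt13_aux_d (κ p b : ℝ) (hκ : 1 < κ) (hp : 0 < p) (hb1 : p < b) (hb2 : b < κ * p) :
    Real.sqrt ((κ * p - b) / p) * ((κ ^ 2 + κ - 2) / (2 * κ * Real.sqrt (2 * κ * (κ ^ 2 - 1))))
      ≤ ovalI κ b p - 1 / κ ∧
    ovalI κ b p - 1 / κ ≤ Real.sqrt ((κ * p - b) / p) * (2 * Real.sqrt (κ - 1) / κ) := by
  have hκ0 : (0:ℝ) < κ := by linarith
  have hκ2 : (0:ℝ) < κ ^ 2 - 1 := by nlinarith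
  have hb0 : (0:ℝ) < b := lt_trans hp hb1
  have hC : (0:ℝ) < κ ^ 2 * p ^ 2 - b ^ 2 := by nlinarith
  have hW : (0:ℝ) ≤ (κ ^ 2 - 1) * (κ ^ 2 * p ^ 2 - b ^ 2) := le_of_lt (mul_pos hκ2 hC)
  set s := κ * p - b with hsdef
  have hs : (0:ℝ) < s := by rw [hsdef]; linarith
  have hs2 : s < (κ - 1) * p := by rw [hsdef]; nlinarith
  set a := Real.sqrt s with hadef
  set c := Real.sqrt p with hcdef
  set m := Real.sqrt (κ - 1) with hmdef
  have ha2 : a ^ 2 = s := Real.sq_sqrt hs.le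
  have hc2 : c ^ 2 = p := Real.sq_sqrt hp.le
  have hm2 : m ^ 2 = κ - 1 := Real.sq_sqrt (by linarith)
  have ha0 : 0 < a := Real.sqrt_pos.mpr hs
  have hc0 : 0 < c := Real.sqrt_pos.mpr hp
  have hm0 : 0 < m := Real.sqrt_pos.mpr (by linarith)
  have hsq : Real.sqrt (s / p) = a / c := Real.sqrt_div hs.le p
  have hIdiff : ovalI κ b p - 1 / κ
      = (Real.sqrt ((κ ^ 2 - 1) * (κ ^ 2 * p ^ 2 - b ^ 2)) - s) / (κ ^ 2 * p) := by
    unfold ovalI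
    rw [hsdef]
    field_simp
    ring
  set sw := Real.sqrt ((κ ^ 2 - 1) * (κ ^ 2 * p ^ 2 - b ^ 2)) with hswdef
  -- upper bound on sqrt W
  have hWup : sw ≤ 2 * κ * m * a * c := by
    have hnn : (0:ℝ) ≤ 2 * κ * m * a * c := by positivity
    have h1 : (κ ^ 2 - 1) * (κ ^ 2 * p ^ 2 - b ^ 2) ≤ (2 * κ * m * a * c) ^ 2 := by
      have haux : (0:ℝ) ≤ (κ - 1) * s * (4 * κ ^ 2 * p - (κ + 1) * (κ * p + b)) := by
        have : (0:ℝ) ≤ 4 * κ ^ 2 * p - (κ + 1) * (κ * p + b) := by nlinarith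
        have := mul_nonneg (mul_nonneg (by linarith : (0:ℝ) ≤ κ - 1) hs.le) this
        linarith
      have hexp : (2 * κ * m * a * c) ^ 2 = 4 * κ ^ 2 * (κ - 1) * s * p := by
        have : (2 * κ * m * a * c) ^ 2 = 4 * κ ^ 2 * m ^ 2 * a ^ 2 * c ^ 2 := by ring
        rw [this, hm2, ha2, hc2]
      rw [hexp, hsdef] at *
      nlinarith [haux]
    calc sw ≤ Real.sqrt ((2 * κ * m * a * c) ^ 2) := Real.sqrt_le_sqrt h1
      _ = 2 * κ * m * a * c := Real.sqrt_sq hnn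
  -- lower bound on sqrt W
  have hWlo : (κ + 1) * m * a * c ≤ sw := by
    have hnn : (0:ℝ) ≤ (κ + 1) * m * a * c := by positivity
    have h1 : ((κ + 1) * m * a * c) ^ 2 ≤ (κ ^ 2 - 1) * (κ ^ 2 * p ^ 2 - b ^ 2) := by
      have haux : (0:ℝ) ≤ (κ + 1) * (κ - 1) * s * (b - p) := by
        have := mul_nonneg (mul_nonneg (mul_nonneg (by linarith : (0:ℝ) ≤ κ + 1)
          (by linarith : (0:ℝ) ≤ κ - 1)) hs.le) (by linarith : (0:ℝ) ≤ b - p)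
        linarith
      have hexp : ((κ + 1) * m * a * c) ^ 2 = (κ + 1) ^ 2 * (κ - 1) * s * p := by
        have : ((κ + 1) * m * a * c) ^ 2 = (κ + 1) ^ 2 * m ^ 2 * a ^ 2 * c ^ 2 := by ring
        rw [this, hm2, ha2, hc2]
      rw [hexp, hsdef] at *
      nlinarith [haux]
    calc (κ + 1) * m * a * c = Real.sqrt (((κ + 1) * m * a * c) ^ 2) :=
          (Real.sqrt_sq hnn).symm
      _ ≤ sw := Real.sqrt_le_sqrt h1
  have hamc : a ≤ m * c := by
    rw [hadef, hmdef, hcdef, ← Real.sqrt_mul (by linarith : (0:ℝ) ≤ κ - 1)]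
    exact Real.sqrt_le_sqrt (by linarith [hs2])
  have hsle : s ≤ m * a * c := by
    have := mul_le_mul_of_nonneg_right hamc ha0.le
    nlinarith [ha2]
  have hge : κ * (m * a * c) ≤ sw - s := by nlinarith [hWlo, hsle]
  constructor
  · -- lower bound (d)
    rw [hIdiff, hsq]
    set d := Real.sqrt (2 * κ * (κ ^ 2 - 1)) with hddef
    have hd2 : d ^ 2 = 2 * κ * (κ ^ 2 - 1) := Real.sq_sqrt (by positivity)
    have hd0 : 0 < d := Real.sqrt_pos.mpr (by positivity)
    have hXY : κ ^ 2 + κ - 2 ≤ 2 * m * d := by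
      have hX2 : (κ ^ 2 + κ - 2) ^ 2 ≤ (2 * m * d) ^ 2 := by
        have h4 : (2 * m * d) ^ 2 = 4 * (κ - 1) * (2 * κ * (κ ^ 2 - 1)) := by
          have : (2 * m * d) ^ 2 = 4 * m ^ 2 * d ^ 2 := by ring
          rw [this, hm2, hd2]
        rw [h4]
        nlinarith [mul_nonneg (sq_nonneg (κ - 1)) (show (0:ℝ) ≤ 7 * κ ^ 2 + 4 * κ - 4 by nlinarith)]
      have hXpos : (0:ℝ) < κ ^ 2 + κ - 2 := by nlinarith
      nlinarith [hX2, hXpos, mul_pos hm0 hd0]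
    -- chain: LHS ≤ m*a/(κ*c) ≤ (sw - s)/(κ^2 p)
    have hR1 : m * a / (κ * c) ≤ (sw - s) / (κ ^ 2 * p) := by
      rw [div_le_div_iff₀ (by positivity) (by positivity)]
      have hmul := mul_le_mul_of_nonneg_right hge (by positivity : (0:ℝ) ≤ κ * c)
      rw [show p = c ^ 2 from hc2.symm]
      nlinarith [hmul]
    have hR2 : a / c * ((κ ^ 2 + κ - 2) / (2 * κ * d)) ≤ m * a / (κ * c) := by
      have heq : a / c * ((κ ^ 2 + κ - 2) / (2 * κ * d)) = a * (κ ^ 2 + κ - 2) / (c * (2 * κ * d)) := by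
        ring
      rw [heq, div_le_div_iff₀ (by positivity) (by positivity)]
      have hmul := mul_le_mul_of_nonneg_left hXY (by positivity : (0:ℝ) ≤ a * κ * c)
      nlinarith [hmul]
    linarith [hR1, hR2]
  · -- upper bound (d)
    rw [hIdiff, hsq]
    rw [div_le_iff₀ (by positivity : (0:ℝ) < κ ^ 2 * p)]
    have hpc : p = c ^ 2 := hc2.symm
    have hrhs : a / c * (2 * m / κ) * (κ ^ 2 * p) = 2 * κ * m * a * c := by
      rw [hpc]
      field_simp
    rw [hrhs]
    linarith [hWup, hs.le]

set_option maxHeartbeats 1000000 in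
/-- Lemma 4.3 (c), (d): bounds on `|P − h(x,P,b)x|` on `Γ(P,b)` and on `I(P,b) − 1/κ`
for `κ > 1`. -/
theorem stmt13 {n : ℕ} (hn : 2 ≤ n) (κ : ℝ) (hκ : 1 < κ)
    (P : EuclideanSpace ℝ (Fin n)) (hP : P ≠ 0) (b : ℝ)
    (hb1 : ‖P‖ < b) (hb2 : b < κ * ‖P‖) :
    -- (c)
    (∀ x ∈ ovalGamma κ b P,
      (b - ‖P‖) / κ ≤ ‖P - ovalH' κ b P x • x‖ ∧
      ‖P - ovalH' κ b P x • x‖ ≤ (b - ‖P‖) / (κ - 1)) ∧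
    -- (d)
    Real.sqrt ((κ * ‖P‖ - b) / ‖P‖) * ((κ ^ 2 + κ - 2) / (2 * κ * Real.sqrt (2 * κ * (κ ^ 2 - 1))))
      ≤ ovalI κ b ‖P‖ - 1 / κ ∧
    ovalI κ b ‖P‖ - 1 / κ ≤
      Real.sqrt ((κ * ‖P‖ - b) / ‖P‖) * (2 * Real.sqrt (κ - 1) / κ) := by
  have hp : (0:ℝ) < ‖P‖ := norm_pos_iff.mpr hP
  set p := ‖P‖ with hpdef
  clear_value p
  have hκ0 : (0:ℝ) < κ := by linarith
  have hκ2 : (0:ℝ) < κ ^ 2 - 1 := by nlinarith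
  have hb0 : (0:ℝ) < b := lt_trans hp hb1
  have hC : (0:ℝ) < κ ^ 2 * p ^ 2 - b ^ 2 := by nlinarith
  have hW : (0:ℝ) ≤ (κ ^ 2 - 1) * (κ ^ 2 * p ^ 2 - b ^ 2) := le_of_lt (mul_pos hκ2 hC)
  have hsW2 : Real.sqrt ((κ ^ 2 - 1) * (κ ^ 2 * p ^ 2 - b ^ 2)) ^ 2
      = (κ ^ 2 - 1) * (κ ^ 2 * p ^ 2 - b ^ 2) := Real.sq_sqrt hW
  have hsWnn : 0 ≤ Real.sqrt ((κ ^ 2 - 1) * (κ ^ 2 * p ^ 2 - b ^ 2)) := Real.sqrt_nonneg _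
  have hIp : ovalI κ b p * p = (b + Real.sqrt ((κ ^ 2 - 1) * (κ ^ 2 * p ^ 2 - b ^ 2))) / κ ^ 2 := by
    unfold ovalI
    field_simp
  constructor
  · -- part (c)
    intro x hx
    obtain ⟨hx1, hx2⟩ := hx
    rw [← hpdef] at hx2
    set t := ⟪x, P⟫ with htdef
    have ht_le : t ≤ p := by
      have h0 := real_inner_le_norm x P
      rw [hx1, one_mul, ← hpdef, ← htdef] at h0
      exact h0
    have hB : Real.sqrt ((κ ^ 2 - 1) * (κ ^ 2 * p ^ 2 - b ^ 2)) ≤ κ ^ 2 * t - b := by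
      rw [hIp] at hx2
      rw [div_le_iff₀ (by positivity : (0:ℝ) < κ ^ 2)] at hx2
      linarith
    have hBnn : 0 ≤ κ ^ 2 * t - b := le_trans hsWnn hB
    have hΔnn : 0 ≤ ovalDelta' κ b p t := by
      unfold ovalDelta'
      nlinarith [hB, hsWnn, hsW2]
    set D := Real.sqrt (ovalDelta' κ b p t) with hDdef
    have hD2 : D ^ 2 = (κ ^ 2 * t - b) ^ 2 - (κ ^ 2 - 1) * (κ ^ 2 * p ^ 2 - b ^ 2) := by
      rw [hDdef, Real.sq_sqrt hΔnn]
      unfold ovalDelta'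
      ring
    have hDnn : 0 ≤ D := Real.sqrt_nonneg _
    have hDle : D ≤ κ ^ 2 * t - b := by
      rw [hDdef]
      calc Real.sqrt (ovalDelta' κ b p t) ≤ Real.sqrt ((κ ^ 2 * t - b) ^ 2) := by
            apply Real.sqrt_le_sqrt
            unfold ovalDelta'
            nlinarith [hW]
        _ = κ ^ 2 * t - b := Real.sqrt_sq hBnn
    set h := ovalH' κ b P x with hhdef
    have hh : (κ ^ 2 - 1) * h = (κ ^ 2 * t - b) - D := by
      rw [hhdef]
      unfold ovalH'
      rw [← hpdef, ← htdef, ← hDdef]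
      field_simp
    have hhnn : 0 ≤ h := by
      have h1 : 0 ≤ (κ ^ 2 - 1) * h := by rw [hh]; linarith
      exact le_of_mul_le_mul_left (by linarith : (κ ^ 2 - 1) * 0 ≤ (κ ^ 2 - 1) * h) hκ2
    have hhle : h ≤ p := by
      have h1 : (κ ^ 2 - 1) * h ≤ (κ ^ 2 - 1) * p := by
        rw [hh]; nlinarith [hDnn, ht_le, hb1]
      exact le_of_mul_le_mul_left h1 hκ2
    set N := ‖P - h • x‖ with hNdef
    have hip : (inner ℝ P x : ℝ) = t := (real_inner_comm x P).trans htdef.symm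
    have hN2 : N ^ 2 = p ^ 2 - 2 * t * h + h ^ 2 := by
      rw [hNdef, norm_sub_sq_real, real_inner_smul_right, norm_smul, hx1, hip]
      rw [Real.norm_eq_abs, abs_of_nonneg hhnn, ← hpdef]
      ring
    have htri : p - h ≤ N := by
      have h1 := norm_sub_norm_le P (h • x)
      rw [norm_smul, hx1, Real.norm_eq_abs, abs_of_nonneg hhnn] at h1
      rw [← hpdef] at h1
      simpa using h1
    have hNnn : (0:ℝ) ≤ N := hNdef ▸ norm_nonneg _
    clear_value t D h N
    have hD' : D = (κ ^ 2 * t - b) - (κ ^ 2 - 1) * h := by linarith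
    rw [hD'] at hD2
    have hkey0 : (κ ^ 2 - 1) * (κ ^ 2 * N ^ 2 - (b - h) ^ 2) = 0 := by
      linear_combination (κ ^ 2 * (κ ^ 2 - 1)) * hN2 + hD2
    have hkey : κ ^ 2 * N ^ 2 = (b - h) ^ 2 := by
      rcases mul_eq_zero.mp hkey0 with h1 | h1
      · exact absurd h1 (by linarith)
      · linarith
    have hbh : 0 ≤ b - h := by linarith
    have hNeq : N = (b - h) / κ := by
      have h1 : N = Real.sqrt (N ^ 2) := (Real.sqrt_sq hNnn).symm
      rw [h1]
      have h2 : N ^ 2 = ((b - h) / κ) ^ 2 := by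
        rw [div_pow]
        rw [eq_div_iff (by positivity : (κ:ℝ) ^ 2 ≠ 0)]
        linarith [hkey]
      rw [h2, Real.sqrt_sq (div_nonneg hbh hκ0.le)]
    have hκN : κ * N = b - h := by
      rw [hNeq]; field_simp
    constructor
    · rw [hNeq]
      gcongr
    · rw [le_div_iff₀ (by linarith : (0:ℝ) < κ - 1)]
      nlinarith [hκN, htri]
  · -- part (d)
    exact stmt13_aux_d κ p b hκ hp hb1 hb2
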